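/- Let |λ,s⟩ be a charged ℓ-partition and let X be its first good vertical e-strip (the maximal admissible vertical e-strip in W(λ,s) with respect to the lexicographic order induced by the order > on boxes). Then X is addable, i.e. λ ⊔ X is again an ℓ-partition. -/
import Mathlib


open scoped Classical

/-- A box `(a, b, j)`: row `a`, column `b` (both 0-indexed), component `j` (0-indexed,
so `j < ℓ`). -/
abbrev Box := ℕ × ℕ × ℕ

/-- The content of a box: `c(a,b,j) = b - a + s_j`. -/
def content (s : ℕ → ℤ) (γ : Box) : ℤ := (γ.2.1 : ℤ) - (γ.1 : ℤ) + s γ.2.2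

/-- An `ℓ`-partition: a family of `ℓ` weakly decreasing eventually-zero sequences,
`lam j a` being the length of row `a` of component `j`. -/
def IsMultipartition (ℓ : ℕ) (lam : ℕ → ℕ → ℕ) : Prop :=
  ∀ j < ℓ, (∀ a, lam j (a + 1) ≤ lam j a) ∧ ∃ N, ∀ a ≥ N, lam j a = 0

/-- `W(λ,s)`: the boxes directly to the right of `λ` (the first box absent from each row
of each component, including column-one boxes of empty rows). -/
def InW (ℓ : ℕ) (lam : ℕ → ℕ → ℕ) (γ : Box) : Prop :=
  γ.2.2 < ℓ ∧ γ.2.1 = lam γ.2.2 γ.1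

/-- An admissible vertical `e`-strip: a sequence of `e` boxes with no horizontal domino,
consecutive decreasing contents, and weakly decreasing component indices. -/
def IsAdmissible (e : ℕ) (s : ℕ → ℤ) (X : Fin e → Box) : Prop :=
  (∀ (i : ℕ) (h : i + 1 < e),
      ¬((X ⟨i + 1, h⟩).1 = (X ⟨i, Nat.lt_of_succ_lt h⟩).1 ∧
        (X ⟨i + 1, h⟩).2.2 = (X ⟨i, Nat.lt_of_succ_lt h⟩).2.2)) ∧
  (∀ (i : ℕ) (h : i + 1 < e),
      content s (X ⟨i, Nat.lt_of_succ_lt h⟩) = content s (X ⟨i + 1, h⟩) + 1) ∧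
  (∀ i i' : Fin e, i < i' → (X i').2.2 ≤ (X i).2.2)

/-- An admissible vertical `e`-strip of the charged `ℓ`-partition `|λ,s⟩`. -/
def IsStrip (e ℓ : ℕ) (lam : ℕ → ℕ → ℕ) (s : ℕ → ℤ) (X : Fin e → Box) : Prop :=
  IsAdmissible e s X ∧ ∀ i, InW ℓ lam (X i)

/-- The order on boxes: `γ > γ'` iff `c(γ) > c(γ')`, or `c(γ) = c(γ')` and `j < j'`. -/
def boxGT (s : ℕ → ℤ) (γ γ' : Box) : Prop :=
  content s γ' < content s γ ∨ (content s γ' = content s γ ∧ γ.2.2 < γ'.2.2)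

/-- The induced lexicographic order on `e`-tuples of boxes. -/
def lexGT (e : ℕ) (s : ℕ → ℤ) (X Y : Fin e → Box) : Prop :=
  ∃ i : Fin e, (∀ i' : Fin e, i' < i → X i' = Y i') ∧ boxGT s (X i) (Y i)

/-- The result of adding the strip `X` to `λ`: each row meeting a box of `X` at its right
end grows by one. -/
noncomputable def addStrip (lam : ℕ → ℕ → ℕ) {e : ℕ} (X : Fin e → Box) : ℕ → ℕ → ℕ :=
  fun j a => lam j a + (if ∃ i, X i = (a, lam j a, j) then 1 else 0)

/-- The strip `X` is addable to `λ`: its boxes are distinct, disjoint from `λ` (automatic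
for boxes of `W(λ,s)`), and adding them yields again an `ℓ`-partition. -/
def IsAddable (e ℓ : ℕ) (lam : ℕ → ℕ → ℕ) (X : Fin e → Box) : Prop :=
  (∀ i i' : Fin e, i ≠ i' → X i ≠ X i') ∧ IsMultipartition ℓ (addStrip lam X)

/-- `X` is the first good vertical `e`-strip of `|λ,s⟩`: the greatest admissible vertical
`e`-strip of `|λ,s⟩` for the lexicographic order. -/
def IsFirstGood (e ℓ : ℕ) (lam : ℕ → ℕ → ℕ) (s : ℕ → ℤ) (X : Fin e → Box) : Prop :=
  IsStrip e ℓ lam s X ∧ ∀ Y, IsStrip e ℓ lam s Y → Y ≠ X → lexGT e s X Y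

/-- The first good vertical `e`-strip of a charged `ℓ`-partition is addable. -/
theorem firstGood_isAddable (e ℓ : ℕ) (he : 2 ≤ e) (hl : 2 ≤ ℓ)
    (lam : ℕ → ℕ → ℕ) (s : ℕ → ℤ) (hlam : IsMultipartition ℓ lam)
    (X : Fin e → Box) (hX : IsFirstGood e ℓ lam s X) :
    IsAddable e ℓ lam X := by
  classical
  obtain ⟨⟨⟨hnd, hcont, hcomp⟩, hW⟩, hmax⟩ := hX
  -- contents as a function on ℕ
  set f : ℕ → ℤ := fun n => if h : n < e then content s (X ⟨n, h⟩) else 0 with hf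
  have hfval : ∀ (n : ℕ) (h : n < e), f n = content s (X ⟨n, h⟩) := fun n h => dif_pos h
  have hfstep : ∀ n : ℕ, n + 1 < e → f n = f (n + 1) + 1 := by
    intro n h
    rw [hfval n (by omega), hfval (n + 1) h]
    exact hcont n h
  have hfchain : ∀ (k d : ℕ), k + d < e → f (k + d) = f k - d := by
    intro k d
    induction d with
    | zero => intro h; simp
    | succ n ih =>
      intro h
      have h2 := ih (by omega)
      have h3 := hfstep (k + n) (by omega)
      have h4 : f (k + (n + 1)) = f (k + n + 1) := rfl
      push_cast
      push_cast at h2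
      omega
  have hcXf : ∀ i : Fin e, content s (X i) = f i.val := fun i => (hfval i.val i.isLt).symm
  have hclt : ∀ i i' : Fin e, i.val < i'.val → content s (X i') < content s (X i) := by
    intro i i' h
    rw [hcXf, hcXf]
    have h2 := hfchain i.val (i'.val - i.val) (by omega)
    rw [show i.val + (i'.val - i.val) = i'.val from by omega] at h2
    have h3 : (0 : ℤ) < ((i'.val - i.val : ℕ) : ℤ) := by
      exact_mod_cast Nat.sub_pos_of_lt h
    omega
  have compMono : ∀ k k' : Fin e, k.val ≤ k'.val → (X k').2.2 ≤ (X k).2.2 := by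
    intro k k' h
    rcases Nat.lt_or_ge k.val k'.val with h' | h'
    · exact hcomp k k' h'
    · have hE : k = k' := Fin.ext (by omega)
      rw [hE]
  have hanti0 : ∀ j, j < ℓ → ∀ a d, lam j (a + d) ≤ lam j a := by
    intro j hj a d
    induction d with
    | zero => simp
    | succ n ih => exact le_trans ((hlam j hj).1 (a + n)) ih
  have hanti : ∀ j, j < ℓ → ∀ a a', a ≤ a' → lam j a' ≤ lam j a := by
    intro j hj a a' h
    have := hanti0 j hj a (a' - a)
    rwa [show a + (a' - a) = a' from by omega] at this
  -- the key lemma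
  have key : ∀ (j a : ℕ), j < ℓ → lam j a = lam j (a + 1) →
      ∀ i : Fin e, X i = (a + 1, lam j a, j) → ∃ i' : Fin e, X i' = (a, lam j a, j) := by
    intro j a hj hab i hi
    by_contra hno
    push_neg at hno
    set b := lam j a with hb
    obtain ⟨iv, hie⟩ := i
    cases iv with
    | zero =>
      -- shift construction : Y = (δ, X 0, X 1, ...)
      set Y : Fin e → Box := fun k =>
        if h : k.val = 0 then ((a, b, j) : Box)
        else X ⟨k.val - 1, by have := k.isLt; omega⟩ with hYdef
      have hY0 : ∀ h : (0 : ℕ) < e, Y ⟨0, h⟩ = (a, b, j) := fun h => dif_pos rfl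
      have hYs : ∀ (m : ℕ) (h : m + 1 < e), Y ⟨m + 1, h⟩ = X ⟨m, by omega⟩ :=
        fun m h => dif_neg (by simp)
      have hYstrip : IsStrip e ℓ lam s Y := by
        refine ⟨⟨?_, ?_, ?_⟩, ?_⟩
        · intro k h
          cases k with
          | zero =>
            rw [hYs 0 h, hY0, hi]
            simp
          | succ m =>
            rw [hYs (m + 1) h, hYs m (by omega)]
            exact hnd m (by omega)
        · intro k h
          cases k with
          | zero =>
            rw [hYs 0 h, hY0, hi]
            simp only [content]
            push_cast
            ring
          | succ m =>
            rw [hYs (m + 1) h, hYs m (by omega)]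
            exact hcont m (by omega)
        · intro k k' hlt
          obtain ⟨kv, hk⟩ := k
          obtain ⟨kv', hk'⟩ := k'
          have hvv : kv < kv' := hlt
          cases kv' with
          | zero => omega
          | succ m' =>
            rw [hYs m' hk']
            cases kv with
            | zero =>
              rw [hY0]
              have h1 : (X ⟨m', by omega⟩).2.2 ≤ (X ⟨0, by omega⟩).2.2 :=
                compMono _ _ (Nat.zero_le _)
              rw [hi] at h1
              simpa using h1
            | succ m =>
              rw [hYs m (by omega)]
              exact compMono ⟨m, by omega⟩ ⟨m', by omega⟩ (show m ≤ m' by omega)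
        · intro k
          obtain ⟨kv, hk⟩ := k
          cases kv with
          | zero =>
            rw [hY0]
            exact ⟨hj, hb⟩
          | succ m =>
            rw [hYs m (by omega)]
            exact hW _
      have hYne : Y ≠ X := by
        intro hYX
        have h0 := congrFun hYX ⟨0, by omega⟩
        rw [hY0, hi] at h0
        have h1 : a = a + 1 := congrArg Prod.fst h0
        omega
      obtain ⟨k, hpre, hk⟩ := hmax Y hYstrip hYne
      obtain ⟨kv, hkk⟩ := k
      cases kv with
      | zero =>
        rw [hY0, hi] at hk
        simp only [boxGT, content] at hk
        rcases hk with h1 | ⟨h1, h2⟩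
        · push_cast at h1; omega
        · simp at h2
      | succ m =>
        have h0 := hpre ⟨0, by omega⟩ (by exact Nat.succ_pos m)
        rw [hi, hY0] at h0
        have h1 : a + 1 = a := congrArg Prod.fst h0
        omega
    | succ m =>
      have hm : m < e := by omega
      rcases hXm : X ⟨m, hm⟩ with ⟨a', b', j'⟩
      have hc := hcont m hie
      rw [hi, hXm] at hc
      simp only [content] at hc
      have hjj' : j ≤ j' := by
        have h1 := hcomp ⟨m, hm⟩ ⟨m + 1, hie⟩ (by exact Nat.lt_succ_self m)
        rw [hi, hXm] at h1
        simpa using h1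
      obtain ⟨hWm1, hWm2⟩ : j' < ℓ ∧ b' = lam j' a' := by
        have h1 := hW ⟨m, hm⟩
        rw [hXm] at h1
        exact h1
      have hnd' := hnd m hie
      rw [hi, hXm] at hnd'
      by_cases hj'j : j' = j
      · subst hj'j
        have hcz : (b' : ℤ) - (a' : ℤ) = (b : ℤ) - (a : ℤ) := by
          push_cast at hc; linarith
        have hne1 : a' ≠ a + 1 := fun hE => hnd' ⟨hE.symm, rfl⟩
        have hne2 : a' ≠ a := by
          intro hE
          apply hno ⟨m, hm⟩
          rw [hXm]
          have hbb : b' = b := by omega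
          rw [hbb, hE]
        rcases Nat.lt_trichotomy a' a with hlt' | hE | hgt'
        · have hle : b ≤ b' := by
            rw [hb, hWm2]
            exact hanti j' hj a' a (le_of_lt hlt')
          omega
        · exact hne2 hE
        · have hle : b' ≤ b := by
            rw [hWm2, hab]
            exact hanti j' hj (a + 1) a' (by omega)
          omega
      · have hjlt : j < j' := lt_of_le_of_ne hjj' (Ne.symm hj'j)
        set Y : Fin e → Box := fun k =>
          if k.val = m then ((a, b, j) : Box) else X k with hYdef
        have hYm : ∀ h : m < e, Y ⟨m, h⟩ = (a, b, j) := fun h => if_pos rfl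
        have hYo : ∀ k : Fin e, k.val ≠ m → Y k = X k := fun k hk => if_neg hk
        have hYstrip : IsStrip e ℓ lam s Y := by
          refine ⟨⟨?_, ?_, ?_⟩, ?_⟩
          · intro k h
            by_cases h1 : k = m
            · subst h1
              rw [hYo ⟨k + 1, h⟩ (show k + 1 ≠ k by omega), hYm, hi]
              simp
            · by_cases h2 : k + 1 = m
              · subst h2
                rw [hYm, hYo ⟨k, by omega⟩ (show k ≠ k + 1 by omega)]
                have h3 := compMono ⟨k, by omega⟩ ⟨k + 1, hm⟩ (show k ≤ k + 1 by omega)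
                rw [hXm] at h3
                rintro ⟨-, hE⟩
                simp at h3 hE
                omega
              · rw [hYo ⟨k + 1, h⟩ (show k + 1 ≠ m from h2), hYo ⟨k, by omega⟩ (show k ≠ m from h1)]
                exact hnd k h
          · intro k h
            by_cases h1 : k = m
            · subst h1
              rw [hYm, hYo ⟨k + 1, h⟩ (show k + 1 ≠ k by omega), hi]
              simp only [content]
              push_cast
              ring
            · by_cases h2 : k + 1 = m
              · subst h2
                rw [hYm, hYo ⟨k, by omega⟩ (show k ≠ k + 1 by omega)]
                have h3 := hcont k (by omega)
                rw [hXm] at h3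
                rw [h3]
                simp only [content]
                push_cast at hc ⊢
                linarith
              · rw [hYo ⟨k + 1, h⟩ (show k + 1 ≠ m from h2), hYo ⟨k, by omega⟩ (show k ≠ m from h1)]
                exact hcont k h
          · intro k k' hlt
            have hvv : k.val < k'.val := hlt
            by_cases hk'm : k'.val = m
            · have hk'e : k' = ⟨m, hm⟩ := Fin.ext hk'm
              rw [hk'e, hYm, hYo k (show k.val ≠ m by omega)]
              have h1 := compMono k ⟨m + 1, hie⟩ (show k.val ≤ m + 1 by omega)
              rw [hi] at h1
              simpa using h1
            · by_cases hkm : k.val = m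
              · have hke : k = ⟨m, hm⟩ := Fin.ext hkm
                rw [hke, hYm, hYo k' (show k'.val ≠ m by omega)]
                have h1 := compMono ⟨m + 1, hie⟩ k' (show m + 1 ≤ k'.val by omega)
                rw [hi] at h1
                simpa using h1
              · rw [hYo k hkm, hYo k' hk'm]
                exact hcomp k k' hlt
          · intro k
            by_cases hkm : k.val = m
            · have hke : k = ⟨m, hm⟩ := Fin.ext hkm
              rw [hke, hYm]
              exact ⟨hj, hb⟩
            · rw [hYo k hkm]
              exact hW k
        have hYne : Y ≠ X := by
          intro hYX
          apply hno ⟨m, hm⟩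
          rw [← congrFun hYX ⟨m, hm⟩, hYm]
        obtain ⟨k, hpre, hk⟩ := hmax Y hYstrip hYne
        rcases Nat.lt_trichotomy k.val m with h1 | h1 | h1
        · rw [hYo k (by omega)] at hk
          simp only [boxGT] at hk
          rcases hk with h | ⟨-, h⟩ <;> exact absurd h (lt_irrefl _)
        · have hke : k = ⟨m, hm⟩ := Fin.ext h1
          rw [hke, hYm, hXm] at hk
          simp only [boxGT, content] at hk
          rcases hk with h | ⟨-, h2⟩
          · push_cast at h hc; omega
          · omega
        · have h0 := hpre ⟨m, hm⟩ (by exact h1)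
          rw [hYm] at h0
          exact hno ⟨m, hm⟩ h0
  constructor
  · -- distinct boxes
    intro i i' hne heq
    have hcc : content s (X i) = content s (X i') := by rw [heq]
    rcases Nat.lt_trichotomy i.val i'.val with h | h | h
    · exact absurd hcc (ne_of_gt (hclt i i' h))
    · exact hne (Fin.ext h)
    · exact absurd hcc.symm (ne_of_gt (hclt i' i h))
  · -- multipartition
    intro j hj
    constructor
    · intro a
      simp only [addStrip]
      by_cases h1 : ∃ i : Fin e, X i = (a + 1, lam j (a + 1), j)
      · by_cases h2 : ∃ i : Fin e, X i = (a, lam j a, j)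
        · rw [if_pos h1, if_pos h2]
          have := (hlam j hj).1 a
          omega
        · have hlt : lam j (a + 1) < lam j a := by
            rcases Nat.lt_or_ge (lam j (a + 1)) (lam j a) with hlt | hge
            · exact hlt
            · exfalso
              have heq : lam j a = lam j (a + 1) := le_antisymm (by omega) ((hlam j hj).1 a)
              obtain ⟨i, hi⟩ := h1
              rw [← heq] at hi
              exact h2 (key j a hj heq i hi)
          rw [if_pos h1, if_neg h2]
          omega
      · rw [if_neg h1]
        have := (hlam j hj).1 a
        split_ifs <;> omega
    · obtain ⟨N, hN⟩ := (hlam j hj).2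
      refine ⟨max N ((Finset.univ.sup fun i : Fin e => (X i).1) + 1), ?_⟩
      intro a ha
      have h0 : lam j a = 0 := hN a (le_trans (le_max_left _ _) ha)
      have hnoi : ¬∃ i : Fin e, X i = (a, lam j a, j) := by
        rintro ⟨i, hi⟩
        have h1 : (X i).1 = a := by rw [hi]
        have hle : (X i).1 ≤ Finset.univ.sup (fun i : Fin e => (X i).1) :=
          Finset.le_sup (f := fun i : Fin e => (X i).1) (Finset.mem_univ i)
        have ha' : (Finset.univ.sup fun i : Fin e => (X i).1) + 1 ≤ a :=
          le_trans (le_max_right _ _) ha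
        omega
      simp only [addStrip]
      rw [if_neg hnoi, h0]
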